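/- Let k ≥ 1 and let y(x) be the formal power series satisfying y(x) = x·exp(y(x)^k / k!). Then the coefficient of x^t in y(x) equals (1/t)·(t/k!)^{(t-1)/k} / ((t-1)/k)! if k divides t−1, and 0 otherwise. In particular, the coefficient of x^{ka+1} equals (1/((ka+1)·a!))·((ka+1)/k!)^a. -/

import Mathlib

open Finset PowerSeries

lemma tri {β : Type*} [AddCommMonoid β] (M : ℕ) (f : ℕ → ℕ → β) :
    ∑ p ∈ (Finset.range M ×ˢ Finset.range M).filter (fun p => p.1 + p.2 < M), f p.1 p.2
      = ∑ m ∈ Finset.range M, ∑ i ∈ Finset.range (m+1), f i (m - i) := by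
  rw [Finset.sum_sigma']
  apply Finset.sum_nbij' (i := fun p => (⟨p.1 + p.2, p.1⟩ : Σ _ : ℕ, ℕ))
    (j := fun q => (q.2, q.1 - q.2))
  · intro p hp
    simp only [Finset.mem_filter, Finset.mem_product, Finset.mem_range] at hp
    simp [Finset.mem_sigma, Finset.mem_range]
    omega
  · intro q hq
    simp only [Finset.mem_sigma, Finset.mem_range] at hq
    simp only [Finset.mem_filter, Finset.mem_product, Finset.mem_range]
    omega
  · intro p hp; simp
  · intro q hq
    simp only [Finset.mem_sigma, Finset.mem_range] at hq
    ext <;> simp <;> omega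
  · intro p hp; simp

lemma binq (n : ℚ) (m : ℕ) :
    ∑ i ∈ Finset.range (m+1), n ^ i * ((i.factorial * (m-i).factorial : ℚ))⁻¹
      = (n+1) ^ m / m.factorial := by
  have h := add_pow n 1 m
  rw [eq_div_iff (by exact_mod_cast m.factorial_ne_zero : (m.factorial:ℚ) ≠ 0)]
  rw [h, Finset.sum_mul]
  apply Finset.sum_congr rfl
  intro i hi
  rw [Finset.mem_range] at hi
  have hi' : i ≤ m := by omega
  rw [Nat.cast_choose ℚ hi']
  have h1 : (i.factorial : ℚ) ≠ 0 := by exact_mod_cast i.factorial_ne_zero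
  have h2 : ((m-i).factorial : ℚ) ≠ 0 := by exact_mod_cast (m-i).factorial_ne_zero
  field_simp
  simp

lemma key (k n m : ℕ) (hk : 1 ≤ k) (hn : 1 ≤ n) (hm : 1 ≤ m) :
    ∑ j ∈ Finset.range (m+1), (n:ℚ)^j * ((j.factorial : ℚ) * (k.factorial:ℚ)^j)⁻¹ *
      (((k:ℚ)*j) / ((k:ℚ)*m) * (((k:ℚ)*m) / (k.factorial:ℚ)) ^ (m-j) / ((m-j).factorial : ℚ))
    = ((n:ℚ) / ((n:ℚ) + k*m)) * (((n:ℚ) + k*m) / (k.factorial:ℚ)) ^ m / (m.factorial:ℚ) := by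
  set K : ℚ := (k.factorial : ℚ) with hK
  have hK0 : K ≠ 0 := by rw [hK]; exact_mod_cast k.factorial_ne_zero
  have hk0 : (k:ℚ) ≠ 0 := by exact_mod_cast Nat.one_le_iff_ne_zero.mp hk
  have hm0 : (m:ℚ) ≠ 0 := by exact_mod_cast Nat.one_le_iff_ne_zero.mp hm
  have ht0 : (n:ℚ) + k*m ≠ 0 := by
    have : (0:ℚ) < n := by exact_mod_cast hn
    positivity
  have hmf : (m.factorial : ℚ) ≠ 0 := by exact_mod_cast m.factorial_ne_zero
  -- rewrite RHS
  have hR : ((n:ℚ) / ((n:ℚ) + k*m)) * (((n:ℚ) + k*m) / K) ^ m / (m.factorial:ℚ)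
      = (n:ℚ) * ((n:ℚ) + k*m)^(m-1) / (K^m * m.factorial) := by
    have hp : ((n:ℚ) + k*m)^m = ((n:ℚ) + k*m)^(m-1) * ((n:ℚ)+k*m) := by
      rw [← pow_succ]; congr 1; omega
    rw [div_pow, hp]
    field_simp
  rw [hR]
  have hexp : ((n:ℚ) + (k*m:ℚ))^(m-1)
      = ∑ i ∈ Finset.range m, (n:ℚ)^i * ((k:ℚ)*m)^(m-1-i) * ((m-1).choose i) := by
    have := add_pow (n:ℚ) ((k:ℚ)*m) (m-1)
    rw [this]
    have : m - 1 + 1 = m := by omega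
    rw [this]
  rw [hexp, Finset.mul_sum, Finset.sum_div]
  rw [Finset.sum_range_succ']
  have h00 : ((n:ℚ)^0 * ((Nat.factorial 0 : ℚ) * K^0)⁻¹ *
      (((k:ℚ)*(0:ℕ)) / ((k:ℚ)*m) * (((k:ℚ)*m) / K) ^ (m-0) / ((m-0).factorial : ℚ))) = 0 := by
    simp
  rw [h00, add_zero]
  apply Finset.sum_congr rfl
  intro i hi
  rw [Finset.mem_range] at hi
  have e1 : m - (i+1) = m-1-i := by omega
  have e2 : i ≤ m - 1 := by omega
  rw [e1, Nat.cast_choose ℚ e2, Nat.factorial_succ]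
  have hKm : K^m = K^(i+1) * K^(m-1-i) := by rw [← pow_add]; congr 1; omega
  have hmf2 : (m:ℚ) * ((m-1).factorial : ℚ) = (m.factorial : ℚ) := by
    exact_mod_cast congrArg (Nat.cast : ℕ → ℚ) (Nat.mul_factorial_pred (by omega))
  have hif : (i.factorial : ℚ) ≠ 0 := by exact_mod_cast i.factorial_ne_zero
  have hif2 : ((m-1-i).factorial : ℚ) ≠ 0 := by exact_mod_cast (m-1-i).factorial_ne_zero
  have hmf1 : ((m-1).factorial : ℚ) ≠ 0 := by exact_mod_cast (m-1).factorial_ne_zero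
  rw [div_pow, hKm, ← hmf2]
  push_cast
  field_simp
  ring

noncomputable def Aq (k : ℕ) (y : PowerSeries ℚ) (n M : ℕ) : PowerSeries ℚ :=
  ∑ j ∈ Finset.range M, ((n:ℚ)^j * ((j.factorial : ℚ) * (k.factorial:ℚ)^j)⁻¹) • y ^ (k*j)

lemma vanish (y : PowerSeries ℚ) (h0 : constantCoeff (R := ℚ) y = 0) {s n : ℕ} (h : s < n) :
    coeff (R := ℚ) s (y^n) = 0 := by
  have hX : (X : PowerSeries ℚ) ∣ y := X_dvd_iff.mpr h0
  obtain ⟨g, hg⟩ := pow_dvd_pow_of_dvd hX n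
  rw [hg, coeff_X_pow_mul', if_neg (by omega)]

lemma Xpow_dvd_ypow (y : PowerSeries ℚ) (h0 : constantCoeff (R := ℚ) y = 0) {M n : ℕ} (h : M ≤ n) :
    (X : PowerSeries ℚ)^M ∣ y^n := by
  have hX : (X : PowerSeries ℚ) ∣ y := X_dvd_iff.mpr h0
  exact dvd_trans (pow_dvd_pow _ h) (pow_dvd_pow_of_dvd hX n)

lemma binqK (K : ℚ) (hK : K ≠ 0) (n : ℚ) (m : ℕ) :
    ∑ i ∈ Finset.range (m+1),
      (n^i * ((i.factorial:ℚ) * K^i)⁻¹) * (((m-i).factorial:ℚ) * K^(m-i))⁻¹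
      = (n+1)^m * ((m.factorial:ℚ) * K^m)⁻¹ := by
  have h1 : ∀ i ∈ Finset.range (m+1),
      (n^i * ((i.factorial:ℚ) * K^i)⁻¹) * (((m-i).factorial:ℚ) * K^(m-i))⁻¹
      = (n ^ i * ((i.factorial * (m-i).factorial : ℚ))⁻¹) * (K^m)⁻¹ := by
    intro i hi
    rw [Finset.mem_range] at hi
    have : K^m = K^i * K^(m-i) := by rw [← pow_add]; congr 1; omega
    rw [this, mul_inv, mul_inv, mul_inv]
    ring
  rw [Finset.sum_congr rfl h1, ← Finset.sum_mul, binq, mul_inv]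
  field_simp

lemma claim1 (k : ℕ) (hk : 1 ≤ k) (y : PowerSeries ℚ) (h0 : constantCoeff (R := ℚ) y = 0) (n M : ℕ) :
    (X : PowerSeries ℚ)^M ∣ Aq k y n M * Aq k y 1 M - Aq k y (n+1) M := by
  have hK0 : ((k.factorial : ℚ)) ≠ 0 := by exact_mod_cast k.factorial_ne_zero
  unfold Aq
  rw [Finset.sum_mul_sum]
  have hstep : (∑ i ∈ Finset.range M, ∑ j ∈ Finset.range M,
      ((((n:ℚ)^i * ((i.factorial : ℚ) * (k.factorial:ℚ)^i)⁻¹) • y ^ (k*i)) *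
       ((((1:ℕ):ℚ)^j * ((j.factorial : ℚ) * (k.factorial:ℚ)^j)⁻¹) • y ^ (k*j))))
      = ∑ p ∈ Finset.range M ×ˢ Finset.range M,
        ((((n:ℚ)^p.1 * ((p.1.factorial : ℚ) * (k.factorial:ℚ)^p.1)⁻¹) *
         (((p.2.factorial : ℚ) * (k.factorial:ℚ)^p.2)⁻¹)) • y ^ (k*(p.1+p.2))) := by
    rw [Finset.sum_product]
    apply Finset.sum_congr rfl; intro i _
    apply Finset.sum_congr rfl; intro j _
    rw [smul_mul_smul_comm, ← pow_add, ← Nat.mul_add]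
    norm_num
  rw [hstep, ← Finset.sum_filter_add_sum_filter_not (Finset.range M ×ˢ Finset.range M)
    (fun p => p.1 + p.2 < M)]
  have hS1 : (∑ p ∈ (Finset.range M ×ˢ Finset.range M).filter (fun p => p.1 + p.2 < M),
        ((((n:ℚ)^p.1 * ((p.1.factorial : ℚ) * (k.factorial:ℚ)^p.1)⁻¹) *
         (((p.2.factorial : ℚ) * (k.factorial:ℚ)^p.2)⁻¹)) • y ^ (k*(p.1+p.2))))
      = ∑ m ∈ Finset.range M,
        ((((n:ℚ)+1)^m * ((m.factorial : ℚ) * (k.factorial:ℚ)^m)⁻¹) • y ^ (k*m)) := by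
    rw [tri M (fun i j => (((n:ℚ)^i * ((i.factorial : ℚ) * (k.factorial:ℚ)^i)⁻¹) *
         (((j.factorial : ℚ) * (k.factorial:ℚ)^j)⁻¹)) • y ^ (k*(i+j)))]
    apply Finset.sum_congr rfl; intro m _
    have hinner : ∀ i ∈ Finset.range (m+1),
        ((((n:ℚ)^i * ((i.factorial : ℚ) * (k.factorial:ℚ)^i)⁻¹) *
         ((((m-i).factorial : ℚ) * (k.factorial:ℚ)^(m-i))⁻¹)) • y ^ (k*(i+(m-i))))
        = ((((n:ℚ)^i * ((i.factorial : ℚ) * (k.factorial:ℚ)^i)⁻¹) *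
         ((((m-i).factorial : ℚ) * (k.factorial:ℚ)^(m-i))⁻¹)) • y ^ (k*m)) := by
      intro i hi
      rw [Finset.mem_range] at hi
      have : i + (m - i) = m := by omega
      rw [this]
    rw [Finset.sum_congr rfl hinner, ← Finset.sum_smul, binqK _ hK0]
  rw [hS1]
  have hrw : ∀ m : ℕ, (((n:ℚ)+1)^m : ℚ) = (((n+1:ℕ):ℚ))^m := by intro m; push_cast; ring
  have hS1' : (∑ m ∈ Finset.range M,
        ((((n:ℚ)+1)^m * ((m.factorial : ℚ) * (k.factorial:ℚ)^m)⁻¹) • y ^ (k*m)))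
      = ∑ j ∈ Finset.range M,
        ((((n+1:ℕ):ℚ))^j * ((j.factorial : ℚ) * (k.factorial:ℚ)^j)⁻¹) • y ^ (k*j) := by
    apply Finset.sum_congr rfl; intro m _
    rw [hrw]
  rw [hS1', add_sub_cancel_left]
  apply Finset.dvd_sum
  intro p hp
  rw [Finset.mem_filter] at hp
  have hM : M ≤ k * (p.1 + p.2) := by
    have h1 : M ≤ p.1 + p.2 := by omega
    have h2 : p.1 + p.2 ≤ k * (p.1 + p.2) := Nat.le_mul_of_pos_left _ (by omega)
    omega
  rw [Algebra.smul_def]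
  exact Dvd.dvd.mul_left (Xpow_dvd_ypow y h0 hM) _

noncomputable def Eq' (k : ℕ) (y : PowerSeries ℚ) : PowerSeries ℚ :=
  PowerSeries.mk fun s => ∑ j ∈ Finset.range (s+1),
    ((j.factorial : ℚ) * (k.factorial:ℚ)^j)⁻¹ * coeff (R := ℚ) s (y^(k*j))

lemma hEA (k : ℕ) (hk : 1 ≤ k) (y : PowerSeries ℚ) (h0 : constantCoeff (R := ℚ) y = 0) (M : ℕ) :
    (X : PowerSeries ℚ)^M ∣ Eq' k y - Aq k y 1 M := by
  rw [X_pow_dvd_iff]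
  intro s hs
  rw [map_sub, sub_eq_zero, Eq', coeff_mk]
  unfold Aq
  rw [map_sum]
  have h1 : ∀ j ∈ Finset.range M,
      coeff (R := ℚ) s (((((1:ℕ):ℚ))^j * ((j.factorial : ℚ) * (k.factorial:ℚ)^j)⁻¹) • y ^ (k*j))
      = ((j.factorial : ℚ) * (k.factorial:ℚ)^j)⁻¹ * coeff (R := ℚ) s (y^(k*j)) := by
    intro j _
    rw [map_smul, smul_eq_mul]
    norm_num
  rw [Finset.sum_congr rfl h1]
  apply Finset.sum_subset
  · intro j hj; rw [Finset.mem_range] at *; omega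
  · intro j _ hj
    rw [Finset.mem_range] at hj
    have : s < k * j := by
      have : j ≤ k * j := Nat.le_mul_of_pos_left _ (by omega)
      omega
    rw [vanish y h0 this, mul_zero]

lemma claim2 (k : ℕ) (hk : 1 ≤ k) (y : PowerSeries ℚ) (h0 : constantCoeff (R := ℚ) y = 0) :
    ∀ n M, (X : PowerSeries ℚ)^M ∣ (Eq' k y)^n - Aq k y n M := by
  intro n
  induction n with
  | zero =>
    intro M
    cases M with
    | zero => simpa using one_dvd _
    | succ M' =>
      have hA : Aq k y 0 (M'+1) = 1 := by
        unfold Aq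
        rw [Finset.sum_eq_single 0]
        · simp
        · intro j _ hj
          have : (((0:ℕ):ℚ))^j = 0 := by
            rw [Nat.cast_zero, zero_pow hj]
          rw [this, zero_mul, zero_smul]
        · simp
      rw [pow_zero, hA, sub_self]
      exact dvd_zero _
  | succ n ih =>
    intro M
    have h1 := hEA k hk y h0 M
    have h3 := claim1 k hk y h0 n M
    have key : (Eq' k y)^(n+1) - Aq k y (n+1) M
        = (Eq' k y)^n * (Eq' k y - Aq k y 1 M) + ((Eq' k y)^n - Aq k y n M) * Aq k y 1 M
          + (Aq k y n M * Aq k y 1 M - Aq k y (n+1) M) := by ring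
    rw [key]
    exact dvd_add (dvd_add (Dvd.dvd.mul_left h1 _) (Dvd.dvd.mul_right (ih M) _)) h3

lemma yXE (k : ℕ) (hk : 1 ≤ k) (y : PowerSeries ℚ) (h0 : constantCoeff (R := ℚ) y = 0)
    (hy : ∀ t : ℕ, coeff (R := ℚ) t y =
      coeff (R := ℚ) t (X * ∑ n ∈ Finset.range (t + 1),
        ((n.factorial * k.factorial ^ n : ℚ))⁻¹ • y ^ (k * n))) :
    y = X * Eq' k y := by
  ext t
  cases t with
  | zero => simp [h0]
  | succ s =>
    rw [hy (s+1), coeff_succ_X_mul, coeff_succ_X_mul, Eq', coeff_mk, map_sum]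
    have h1 : ∀ n ∈ Finset.range (s+2),
        coeff (R := ℚ) s (((n.factorial * k.factorial ^ n : ℚ))⁻¹ • y ^ (k * n))
        = ((n.factorial : ℚ) * (k.factorial:ℚ)^n)⁻¹ * coeff (R := ℚ) s (y^(k*n)) := by
      intro n _
      rw [map_smul, smul_eq_mul]
    rw [Finset.sum_congr rfl h1]
    have hzero : coeff (R := ℚ) s (y^(k*(s+1))) = 0 := by
      apply vanish y h0
      have : s + 1 ≤ k * (s+1) := Nat.le_mul_of_pos_left _ (by omega)
      omega
    rw [show s + 1 + 1 = (s+1) + 1 from rfl, Finset.sum_range_succ, hzero, mul_zero, add_zero]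

noncomputable def Bq (k n t : ℕ) : ℚ :=
  if n ≤ t ∧ k ∣ t - n then
    (if t = 0 then 1 else
      ((n:ℚ) / t) * ((t : ℚ) / k.factorial) ^ ((t - n) / k) / ((t - n) / k).factorial)
  else 0

lemma main (k : ℕ) (hk : 1 ≤ k) (y : PowerSeries ℚ) (h0 : constantCoeff (R := ℚ) y = 0)
    (hXE : y = X * Eq' k y) :
    ∀ t n, coeff (R := ℚ) t (y^n) = Bq k n t := by
  intro t
  induction t using Nat.strong_induction_on with
  | _ t IH =>
  intro n
  match n with
  | 0 =>
    rw [pow_zero, coeff_one]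
    unfold Bq
    by_cases ht : t = 0
    · subst ht; simp
    · simp only [ht, if_false, Nat.sub_zero, Nat.cast_zero, zero_div, zero_mul]
      split_ifs <;> simp
  | (n'+1) =>
    have hn : 1 ≤ n' + 1 := by omega
    have hyn : y^(n'+1) = X^(n'+1) * (Eq' k y)^(n'+1) := by
      have h := congrArg (fun z : PowerSeries ℚ => z ^ (n'+1)) hXE
      simpa [mul_pow] using h
    rw [hyn, coeff_X_pow_mul']
    by_cases hnt : n'+1 ≤ t
    · rw [if_pos hnt]
      obtain ⟨s, hts⟩ : ∃ s, t = (n'+1) + s := ⟨t - (n'+1), by omega⟩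
      have hsdef : t - (n'+1) = s := by omega
      rw [hsdef]
      have hst : s < t := by omega
      have hcs : coeff (R := ℚ) s ((Eq' k y)^(n'+1)) = coeff (R := ℚ) s (Aq k y (n'+1) (s+1)) := by
        have h2 := (X_pow_dvd_iff.mp (claim2 k hk y h0 (n'+1) (s+1))) s (Nat.lt_succ_self s)
        rw [map_sub] at h2
        exact sub_eq_zero.mp h2
      rw [hcs]
      unfold Aq
      rw [map_sum]
      have h1 : ∀ j ∈ Finset.range (s+1),
          coeff (R := ℚ) s (((((n'+1:ℕ)):ℚ)^j * ((j.factorial : ℚ) * (k.factorial:ℚ)^j)⁻¹) • y ^ (k*j))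
          = (((n'+1:ℕ):ℚ)^j * ((j.factorial : ℚ) * (k.factorial:ℚ)^j)⁻¹) * Bq k (k*j) s := by
        intro j _
        rw [map_smul, smul_eq_mul, IH s hst (k*j)]
      rw [Finset.sum_congr rfl h1]
      by_cases hds : k ∣ s
      · obtain ⟨m, hm⟩ := hds
        by_cases hm0 : m = 0
        · subst hm0
          rw [Nat.mul_zero] at hm
          subst hm
          rw [Finset.sum_range_one]
          have hB00 : Bq k (k*0) 0 = 1 := by unfold Bq; simp
          rw [hB00]
          unfold Bq
          rw [if_pos ⟨by omega, by simp [hts]⟩, if_neg (by omega)]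
          have e1 : t - (n'+1) = 0 := by omega
          rw [e1, Nat.zero_div, pow_zero, Nat.factorial_zero]
          have e2 : ((n'+1:ℕ):ℚ) = (t:ℚ) := by
            have : n'+1 = t := by omega
            exact_mod_cast congrArg (fun x : ℕ => (x:ℚ)) this
          rw [e2, div_self (by exact_mod_cast (by omega : t ≠ 0)), Nat.cast_one]
          norm_num
        · have hm1 : 1 ≤ m := by omega
          have hs1 : 1 ≤ s := by
            have := Nat.le_mul_of_pos_left m (show 0 < k by omega)
            omega
          -- shrink range (s+1) to range (m+1)
          have hsub : Finset.range (m+1) ⊆ Finset.range (s+1) := by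
            apply Finset.range_subset_range.mpr
            have := Nat.le_mul_of_pos_left m (show 0 < k by omega)
            omega
          have hvan : ∀ j ∈ Finset.range (s+1), j ∉ Finset.range (m+1) →
              (((n'+1:ℕ):ℚ)^j * ((j.factorial : ℚ) * (k.factorial:ℚ)^j)⁻¹) * Bq k (k*j) s = 0 := by
            intro j _ hj
            rw [Finset.mem_range] at hj
            have hkj : ¬ (k*j ≤ s) := by
              rw [hm]
              intro hc
              have := Nat.mul_le_mul_left k (show m+1 ≤ j by omega)
              nlinarith [hc, this]
            unfold Bq
            rw [if_neg (by tauto), mul_zero]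
          rw [← Finset.sum_subset hsub hvan]
          have hterm : ∀ j ∈ Finset.range (m+1),
              (((n'+1:ℕ):ℚ)^j * ((j.factorial : ℚ) * (k.factorial:ℚ)^j)⁻¹) * Bq k (k*j) s
              = ((n'+1:ℕ):ℚ)^j * ((j.factorial : ℚ) * (k.factorial:ℚ)^j)⁻¹ *
                (((k:ℚ)*j) / ((k:ℚ)*m) * (((k:ℚ)*m) / (k.factorial:ℚ)) ^ (m-j) /
                  ((m-j).factorial : ℚ)) := by
            intro j hj
            rw [Finset.mem_range] at hj
            have hjm : j ≤ m := by omega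
            have hkjs : k*j ≤ s := by rw [hm]; exact Nat.mul_le_mul_left k hjm
            have hsub2 : s - k*j = k*(m-j) := by rw [hm, Nat.mul_sub_left_distrib]
            congr 1
            unfold Bq
            rw [if_pos ⟨hkjs, by rw [hsub2]; exact Dvd.intro _ rfl⟩, if_neg (by omega)]
            rw [hsub2, Nat.mul_div_cancel_left _ (show 0 < k by omega)]
            rw [hm]
            push_cast
            ring
          rw [Finset.sum_congr rfl hterm, key k (n'+1) m hk hn hm1]
          unfold Bq
          rw [if_pos ⟨hnt, by rw [hsdef, hm]; exact Dvd.intro _ rfl⟩, if_neg (by omega)]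
          rw [hsdef, hm, Nat.mul_div_cancel_left _ (show 0 < k by omega)]
          have ecast : (t:ℚ) = ((n'+1:ℕ):ℚ) + (k:ℚ)*(m:ℚ) := by
            rw [hts, hm]; push_cast; ring
          rw [ecast]
          try push_cast
          try ring
      · -- ¬ k ∣ s : everything vanishes
        have hzero : ∀ j ∈ Finset.range (s+1),
            (((n'+1:ℕ):ℚ)^j * ((j.factorial : ℚ) * (k.factorial:ℚ)^j)⁻¹) * Bq k (k*j) s = 0 := by
          intro j _
          unfold Bq
          rw [if_neg, mul_zero]
          rintro ⟨hc1, hc2⟩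
          exact hds (by
            have : s = (s - k*j) + k*j := by omega
            rw [this]
            exact dvd_add hc2 (dvd_mul_right k j))
        rw [Finset.sum_eq_zero hzero]
        unfold Bq
        rw [if_neg]
        rintro ⟨-, hc2⟩
        exact hds (by rwa [hsdef] at hc2)
    · rw [if_neg hnt]
      unfold Bq
      rw [if_neg (by tauto)]



open PowerSeries in
/-- Lagrange inversion for `y = x · exp(y^k / k!)`: if `y` is a formal power series over `ℚ`
with zero constant term satisfying the functional equation `y = X · Φ(y)` with
`Φ(u) = exp(u^k/k!) = ∑_{n ≥ 0} (1/n!) (u^k/k!)^n` (expressed coefficientwise, where for the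
coefficient of `x^t` only the terms with `n ≤ t` contribute), then
`[x^t] y = (1/t) · (t/k!)^((t-1)/k) / ((t-1)/k)!` when `k ∣ t - 1` (and `0` otherwise);
in particular `[x^(ka+1)] y = (1/((ka+1)·a!)) · ((ka+1)/k!)^a`. -/
theorem stmt7 (k : ℕ) (hk : 1 ≤ k) (y : PowerSeries ℚ)
    (h0 : constantCoeff (R := ℚ) y = 0)
    (hy : ∀ t : ℕ, coeff (R := ℚ) t y =
      coeff (R := ℚ) t (X * ∑ n ∈ Finset.range (t + 1),
        ((n.factorial * k.factorial ^ n : ℚ))⁻¹ • y ^ (k * n))) :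
    (∀ t : ℕ, 1 ≤ t → coeff (R := ℚ) t y =
      if k ∣ t - 1 then
        (1 / t) * ((t : ℚ) / k.factorial) ^ ((t - 1) / k) / ((t - 1) / k).factorial
      else 0) ∧
    ∀ a : ℕ, coeff (R := ℚ) (k * a + 1) y =
      1 / ((k * a + 1) * a.factorial) * (((k * a + 1 : ℕ) : ℚ) / k.factorial) ^ a := by
  have hXE := yXE k hk y h0 hy
  have hmain := main k hk y h0 hXE
  constructor
  · intro t ht
    have h1 := hmain t 1
    rw [pow_one] at h1
    rw [h1]
    unfold Bq
    by_cases hd : k ∣ t - 1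
    · rw [if_pos ⟨ht, hd⟩, if_neg (by omega), if_pos hd]
      norm_num
    · rw [if_neg (by tauto), if_neg hd]
  · intro a
    have h1 := hmain (k*a+1) 1
    rw [pow_one] at h1
    rw [h1]
    unfold Bq
    rw [if_pos ⟨by omega, ⟨a, by omega⟩⟩, if_neg (by omega)]
    have e1 : (k*a+1) - 1 = k*a := by omega
    rw [e1, Nat.mul_div_cancel_left _ (show 0 < k by omega)]
    have ht0 : ((k*a+1 : ℕ):ℚ) ≠ 0 := by
      exact_mod_cast (show k*a+1 ≠ 0 by omega)
    have haf : (a.factorial:ℚ) ≠ 0 := by exact_mod_cast a.factorial_ne_zero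
    push_cast
    push_cast at ht0
    field_simp
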